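/- arXiv:2108.09685 — 2 statements merged into one kernel-verified Lean document; each statement's English description precedes it below -/
import Mathlib

section
/- For every (z, φ) ∈ ℝ⁴ × ℝ with z ≠ 0, the following identity between vectors of ℝ⁴ holds at (z, φ): 𝔯³·J(∇^H𝔯) = ρ²·∇^Hφ − 2·φ·ρ·∇^Hρ = ρ⁴·∇^H(φ/ρ²), where φ also denotes the fifth coordinate function and ρ, 𝔯, ∇^H, J are as defined in the context. -/
open Real
noncomputable section

abbrev R4 : Type := EuclideanSpace ℝ (Fin 4)

/-- The Heisenberg group ℍ² as ℝ⁴ × ℝ, coordinates (z₁, z₂, z₃, z₄, φ). -/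
abbrev H2 : Type := R4 × ℝ

/-- The horizontal vector fields X₁, Y₁, X₂, Y₂ of ℍ², as vectors of ℝ⁴ × ℝ at a point:
`X₁ = ∂_{z₁} − z₂·∂_φ`, `Y₁ = ∂_{z₂} + z₁·∂_φ`, `X₂ = ∂_{z₃} − z₄·∂_φ`,
`Y₂ = ∂_{z₄} + z₃·∂_φ`. -/
def hvec : Fin 4 → H2 → H2
  | 0, p => (EuclideanSpace.single 0 1, -(p.1 1))
  | 1, p => (EuclideanSpace.single 1 1, p.1 0)
  | 2, p => (EuclideanSpace.single 2 1, -(p.1 3))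
  | 3, p => (EuclideanSpace.single 3 1, p.1 2)

/-- Derivative of `f` along the `k`-th horizontal vector field. -/
def hderiv (k : Fin 4) (f : H2 → ℝ) (p : H2) : ℝ := fderiv ℝ f p (hvec k p)

/-- The horizontal gradient `∇^H f = (X₁f, Y₁f, X₂f, Y₂f) ∈ ℝ⁴`. -/
def hGrad (f : H2 → ℝ) (p : H2) : R4 :=
  (WithLp.equiv 2 (Fin 4 → ℝ)).symm
    ![hderiv 0 f p, hderiv 1 f p, hderiv 2 f p, hderiv 3 f p]

/-- Standard complex structure on ℝ⁴ ≅ ℂ²: `J(a₁,a₂,a₃,a₄) = (−a₂,a₁,−a₄,a₃)`. -/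
def Jc (v : R4) : R4 := (WithLp.equiv 2 (Fin 4 → ℝ)).symm ![-v 1, v 0, -v 3, v 2]

/-- The Folland–Korányi gauge `𝔯(z,φ) = (|z|⁴ + 4φ²)^{1/4}`. -/
def kGauge (p : H2) : ℝ := (‖p.1‖ ^ 4 + 4 * p.2 ^ 2) ^ ((1:ℝ)/4)

section auxiliary

lemma aux_hn2 (p : H2) :
    HasFDerivAt (fun q : H2 => ‖q.1‖ ^ 2)
      (2 • (innerSL ℝ p.1).comp (ContinuousLinearMap.fst ℝ R4 ℝ)) p :=
  (hasFDerivAt_fst).norm_sq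

lemma aux_fderiv_norm (p : H2) (hp : p.1 ≠ 0) (w : H2) :
    fderiv ℝ (fun q : H2 => ‖q.1‖) p w = ‖p.1‖⁻¹ * (inner ℝ p.1 w.1 : ℝ) := by
  have hsq : ‖p.1‖ ^ 2 ≠ 0 := pow_ne_zero 2 (norm_ne_zero_iff.mpr hp)
  have h1 := (Real.hasDerivAt_sqrt hsq).comp_hasFDerivAt p (aux_hn2 p)
  have h2 : ((√·) ∘ fun q : H2 => ‖q.1‖ ^ 2) = fun q : H2 => ‖q.1‖ := by
    funext q; simp [Function.comp, Real.sqrt_sq (norm_nonneg _)]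
  rw [h2, Real.sqrt_sq (norm_nonneg _)] at h1
  rw [h1.fderiv]
  have hz : ‖p.1‖ ≠ 0 := norm_ne_zero_iff.mpr hp
  simp only [ContinuousLinearMap.smul_apply, ContinuousLinearMap.coe_smul', Pi.smul_apply,
    ContinuousLinearMap.comp_apply, ContinuousLinearMap.coe_fst', innerSL_apply_apply, smul_eq_mul]
  field_simp
  ring

lemma aux_fderiv_snd (p : H2) (w : H2) :
    fderiv ℝ (fun q : H2 => q.2) p w = w.2 := by
  have hA : HasFDerivAt (fun q : H2 => q.2) (ContinuousLinearMap.snd ℝ R4 ℝ) p :=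
    hasFDerivAt_snd
  rw [hA.fderiv]; rfl

lemma aux_fderiv_div (p : H2) (hp : p.1 ≠ 0) (w : H2) :
    ‖p.1‖ ^ 4 * fderiv ℝ (fun q : H2 => q.2 / ‖q.1‖ ^ 2) p w =
      ‖p.1‖ ^ 2 * w.2 - 2 * p.2 * (inner ℝ p.1 w.1 : ℝ) := by
  have hzn : ‖p.1‖ ≠ 0 := norm_ne_zero_iff.mpr hp
  have hsq : ‖p.1‖ ^ 2 ≠ 0 := pow_ne_zero 2 hzn
  have hinv := (hasDerivAt_inv hsq).comp_hasFDerivAt p (aux_hn2 p)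
  have hA : HasFDerivAt (fun q : H2 => q.2) (ContinuousLinearMap.snd ℝ R4 ℝ) p :=
    hasFDerivAt_snd
  have hD := HasFDerivAt.mul (𝕜 := ℝ) hA hinv
  have hfun : (fun q : H2 => q.2 / ‖q.1‖ ^ 2) =
      (fun q : H2 => q.2) * ((fun x : ℝ => x⁻¹) ∘ fun q : H2 => ‖q.1‖ ^ 2) := by
    funext q; simp [div_eq_mul_inv]
  rw [hfun, hD.fderiv]
  simp only [Function.comp, ContinuousLinearMap.add_apply, ContinuousLinearMap.smul_apply,
    ContinuousLinearMap.coe_smul', Pi.smul_apply, ContinuousLinearMap.comp_apply,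
    ContinuousLinearMap.coe_fst', ContinuousLinearMap.coe_snd', innerSL_apply_apply, smul_eq_mul]
  field_simp
  ring

lemma aux_fderiv_gauge (p : H2) (hp : p.1 ≠ 0) (w : H2) :
    fderiv ℝ kGauge p w =
      (‖p.1‖ ^ 4 + 4 * p.2 ^ 2) ^ (-(3:ℝ)/4) *
        (‖p.1‖ ^ 2 * (inner ℝ p.1 w.1 : ℝ) + 2 * p.2 * w.2) := by
  have hz : (0:ℝ) < ‖p.1‖ := norm_pos_iff.mpr hp
  have hgpos : (0:ℝ) < ‖p.1‖ ^ 4 + 4 * p.2 ^ 2 := by positivity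
  have hn2 := aux_hn2 p
  have hn4 := HasFDerivAt.mul (𝕜 := ℝ) hn2 hn2
  have hs2 := HasFDerivAt.mul (𝕜 := ℝ) (hasFDerivAt_snd (p := p) (E := R4))
    (hasFDerivAt_snd (p := p) (E := R4))
  have hg := hn4.add (hs2.const_mul (4:ℝ))
  have hg' : HasFDerivAt (fun q : H2 => ‖q.1‖ ^ 4 + 4 * q.2 ^ 2)
      (((‖p.1‖ ^ 2) • (2 • (innerSL ℝ p.1).comp (ContinuousLinearMap.fst ℝ R4 ℝ)) +
         (‖p.1‖ ^ 2) • (2 • (innerSL ℝ p.1).comp (ContinuousLinearMap.fst ℝ R4 ℝ))) +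
        (4:ℝ) • (p.2 • ContinuousLinearMap.snd ℝ R4 ℝ +
          p.2 • ContinuousLinearMap.snd ℝ R4 ℝ)) p := by
    have hfeq : (fun q : H2 => ‖q.1‖ ^ 4 + 4 * q.2 ^ 2) =
        (((fun q : H2 => ‖q.1‖ ^ 2) * fun q : H2 => ‖q.1‖ ^ 2) +
          fun y : H2 => 4 * ((Prod.snd * Prod.snd : H2 → ℝ) y)) := by
      funext q; simp only [Pi.add_apply, Pi.mul_apply]; ring
    rw [hfeq]; exact hg
  have hr := (Real.hasDerivAt_rpow_const
      (p := (1:ℝ)/4) (Or.inl hgpos.ne')).comp_hasFDerivAt p hg'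
  have hK : kGauge = ((fun x : ℝ => x ^ ((1:ℝ)/4)) ∘ fun q : H2 => ‖q.1‖ ^ 4 + 4 * q.2 ^ 2) := rfl
  rw [hK, hr.fderiv]
  simp only [ContinuousLinearMap.smul_apply, ContinuousLinearMap.add_apply,
    ContinuousLinearMap.coe_smul', Pi.smul_apply, ContinuousLinearMap.comp_apply,
    ContinuousLinearMap.coe_fst', ContinuousLinearMap.coe_snd', innerSL_apply_apply,
    smul_eq_mul]
  have h14 : (‖p.1‖ ^ 4 + 4 * p.2 ^ 2) ^ ((1:ℝ)/4 - 1) =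
      (‖p.1‖ ^ 4 + 4 * p.2 ^ 2) ^ (-(3:ℝ)/4) := by norm_num
  rw [h14]
  ring

lemma aux_kg3_fderiv (p : H2) (hp : p.1 ≠ 0) (w : H2) :
    kGauge p ^ 3 * fderiv ℝ kGauge p w =
      ‖p.1‖ ^ 2 * (inner ℝ p.1 w.1 : ℝ) + 2 * p.2 * w.2 := by
  have hz : (0:ℝ) < ‖p.1‖ := norm_pos_iff.mpr hp
  have hgpos : (0:ℝ) < ‖p.1‖ ^ 4 + 4 * p.2 ^ 2 := by positivity
  have h1 : kGauge p ^ 3 * (‖p.1‖ ^ 4 + 4 * p.2 ^ 2) ^ (-(3:ℝ)/4) = 1 := by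
    rw [kGauge, ← Real.rpow_natCast ((‖p.1‖ ^ 4 + 4 * p.2 ^ 2) ^ ((1:ℝ)/4)) 3,
      ← Real.rpow_mul hgpos.le, ← Real.rpow_add hgpos]
    norm_num
  rw [aux_fderiv_gauge p hp w, ← mul_assoc, h1, one_mul]

end auxiliary

/-- Equation (kora-36) of the paper (with the orientation convention
`J(a₁,a₂,a₃,a₄) = (−a₂,a₁,−a₄,a₃)`): for `z ≠ 0`,
`𝔯³·J(∇^H𝔯) = ρ²·∇^Hφ − 2φρ·∇^Hρ = ρ⁴·∇^H(φ/ρ²)`. -/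
theorem gauge_gradient_rotation (p : H2) (hp : p.1 ≠ 0) :
    (kGauge p) ^ 3 • Jc (hGrad kGauge p) =
        ‖p.1‖ ^ 2 • hGrad (fun q : H2 => q.2) p -
          (2 * p.2 * ‖p.1‖) • hGrad (fun q : H2 => ‖q.1‖) p ∧
    (kGauge p) ^ 3 • Jc (hGrad kGauge p) =
        ‖p.1‖ ^ 4 • hGrad (fun q : H2 => q.2 / ‖q.1‖ ^ 2) p := by
  have hz : ‖p.1‖ ≠ 0 := norm_ne_zero_iff.mpr hp
  have hzi : ‖p.1‖ * ‖p.1‖⁻¹ = 1 := mul_inv_cancel₀ hz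
  have e0 := aux_kg3_fderiv p hp (hvec 0 p)
  have e1 := aux_kg3_fderiv p hp (hvec 1 p)
  have e2 := aux_kg3_fderiv p hp (hvec 2 p)
  have e3 := aux_kg3_fderiv p hp (hvec 3 p)
  have n0 := aux_fderiv_norm p hp (hvec 0 p)
  have n1 := aux_fderiv_norm p hp (hvec 1 p)
  have n2 := aux_fderiv_norm p hp (hvec 2 p)
  have n3 := aux_fderiv_norm p hp (hvec 3 p)
  have d0 := aux_fderiv_div p hp (hvec 0 p)
  have d1 := aux_fderiv_div p hp (hvec 1 p)
  have d2 := aux_fderiv_div p hp (hvec 2 p)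
  have d3 := aux_fderiv_div p hp (hvec 3 p)
  have a0 := aux_fderiv_snd p (hvec 0 p)
  have a1 := aux_fderiv_snd p (hvec 1 p)
  have a2 := aux_fderiv_snd p (hvec 2 p)
  have a3 := aux_fderiv_snd p (hvec 3 p)
  simp only [hvec, EuclideanSpace.inner_single_right, conj_trivial, mul_one, one_mul]
    at e0 e1 e2 e3 n0 n1 n2 n3 d0 d1 d2 d3 a0 a1 a2 a3
  constructor <;>
  · ext i
    fin_cases i <;>
    · simp only [hGrad, Jc, hderiv, hvec, PiLp.smul_apply, PiLp.sub_apply,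
        WithLp.equiv_symm_apply, PiLp.toLp_apply, Matrix.cons_val_zero, Matrix.cons_val_one,
        Matrix.head_cons, Matrix.cons_val_two, Matrix.tail_cons, Matrix.cons_val_three,
        Matrix.cons_val_fin_one, Fin.mk_zero, Fin.mk_one, Fin.reduceFinMk, Nat.succ_eq_add_one, Nat.reduceAdd, smul_eq_mul, a0, a1, a2, a3, n0, n1, n2, n3]
      first
      | linear_combination -e1 + 2 * p.2 * p.1 0 * hzi
      | linear_combination e0 + 2 * p.2 * p.1 1 * hzi
      | linear_combination -e3 + 2 * p.2 * p.1 2 * hzi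
      | linear_combination e2 + 2 * p.2 * p.1 3 * hzi
      | linear_combination -e1 - d0
      | linear_combination e0 - d1
      | linear_combination -e3 - d2
      | linear_combination e2 - d3
end
end

section
/- The function h : ℝ → ℝ defined by h(σ) = (σ·arctan σ + 1)/√(1+σ²) is differentiable with h′(σ) = arctan σ/(1+σ²)^{3/2} for every σ ∈ ℝ, and satisfies 1 ≤ h(σ) ≤ π/2 for every σ ∈ ℝ. -/
open Real
noncomputable section

lemma sqrt_one_add_sq_pos (σ : ℝ) : 0 < Real.sqrt (1 + σ ^ 2) :=
  Real.sqrt_pos.mpr (by positivity)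

lemma my_arctan_nonneg {x : ℝ} (hx : 0 ≤ x) : 0 ≤ Real.arctan x := by
  rw [← Real.arctan_zero]
  exact Real.arctan_strictMono.monotone hx

lemma key_lower (σ : ℝ) : σ ^ 2 / Real.sqrt (1 + σ ^ 2) ≤ σ * Real.arctan σ := by
  have habs : σ * Real.arctan σ = |σ| * Real.arctan |σ| := by
    rcases abs_cases σ with ⟨h1, h2⟩ | ⟨h1, h2⟩ <;> rw [h1] <;> simp [Real.arctan_neg]
  have hsin := Real.sin_le (my_arctan_nonneg (abs_nonneg σ))
  rw [Real.sin_arctan] at hsin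
  have hsq : |σ| ^ 2 = σ ^ 2 := sq_abs σ
  rw [hsq] at hsin
  have := mul_le_mul_of_nonneg_left hsin (abs_nonneg σ)
  rw [habs]
  calc σ ^ 2 / Real.sqrt (1 + σ ^ 2) = |σ| * (|σ| / Real.sqrt (1 + σ ^ 2)) := by
        rw [← sq_abs σ]; ring
    _ ≤ |σ| * Real.arctan |σ| := this

/-- Equations (k-18-rep) and (k-19-rep) of the paper: the function
`h(σ) = (σ·arctan σ + 1)/√(1+σ²)` has derivative `arctan σ/(1+σ²)^{3/2}` and satisfies
`1 ≤ h ≤ π/2` on ℝ. -/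
theorem arctan_weight_bounds :
    (∀ σ : ℝ, HasDerivAt (fun s : ℝ => (s * Real.arctan s + 1) / Real.sqrt (1 + s ^ 2))
      (Real.arctan σ / (1 + σ ^ 2) ^ ((3:ℝ)/2)) σ) ∧
    (∀ σ : ℝ, 1 ≤ (σ * Real.arctan σ + 1) / Real.sqrt (1 + σ ^ 2) ∧
      (σ * Real.arctan σ + 1) / Real.sqrt (1 + σ ^ 2) ≤ π / 2) := by
  constructor
  · intro σ
    have hpos : (0:ℝ) < 1 + σ ^ 2 := by positivity
    have hS : 0 < Real.sqrt (1 + σ ^ 2) := sqrt_one_add_sq_pos σ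
    have hS2 : Real.sqrt (1 + σ ^ 2) ^ 2 = 1 + σ ^ 2 := Real.sq_sqrt hpos.le
    have h1 : HasDerivAt (fun s : ℝ => s * Real.arctan s + 1)
        (Real.arctan σ + σ * (1 / (1 + σ ^ 2))) σ := by
      have := ((hasDerivAt_id σ).mul (Real.hasDerivAt_arctan σ)).add_const 1
      simpa [mul_comm] using this
    have h2 : HasDerivAt (fun s : ℝ => Real.sqrt (1 + s ^ 2))
        (σ / Real.sqrt (1 + σ ^ 2)) σ := by
      have hinner : HasDerivAt (fun s : ℝ => 1 + s ^ 2) (2 * σ) σ := by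
        simpa using (hasDerivAt_pow 2 σ).const_add 1
      have := (Real.hasDerivAt_sqrt hpos.ne').comp σ hinner
      refine this.congr_deriv ?_
      field_simp
    have hd := h1.div h2 hS.ne'
    refine hd.congr_deriv ?_
    rw [show ((1:ℝ) + σ ^ 2) ^ ((3:ℝ)/2) = Real.sqrt (1 + σ ^ 2) ^ 3 by
      rw [Real.sqrt_eq_rpow, ← Real.rpow_natCast ((1 + σ ^ 2) ^ ((1:ℝ)/2)) 3,
        ← Real.rpow_mul hpos.le]
      norm_num]
    field_simp
    linear_combination ((Real.arctan σ) * (1 + σ ^ 2) + σ) * hS2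
  · intro σ
    have hpos : (0:ℝ) < 1 + σ ^ 2 := by positivity
    have hS : 0 < Real.sqrt (1 + σ ^ 2) := sqrt_one_add_sq_pos σ
    have hS2 : Real.sqrt (1 + σ ^ 2) ^ 2 = 1 + σ ^ 2 := Real.sq_sqrt hpos.le
    have h1S : 1 ≤ Real.sqrt (1 + σ ^ 2) := by
      rw [Real.one_le_sqrt]
      nlinarith [sq_nonneg σ]
    constructor
    · rw [le_div_iff₀ hS]
      have := key_lower σ
      have h2 : σ ^ 2 / Real.sqrt (1 + σ ^ 2) + 1 ≤ σ * Real.arctan σ + 1 := by linarith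
      have h3 : Real.sqrt (1 + σ ^ 2) ≤ σ ^ 2 / Real.sqrt (1 + σ ^ 2) + 1 := by
        rw [div_add' _ _ _ hS.ne', le_div_iff₀ hS]
        nlinarith
      linarith [h3.trans h2]
    · -- upper bound
      rw [div_le_iff₀ hS]
      have habs : σ * Real.arctan σ = |σ| * Real.arctan |σ| := by
        rcases abs_cases σ with ⟨h1, h2⟩ | ⟨h1, h2⟩ <;> rw [h1] <;> simp [Real.arctan_neg]
      have hsqa : 1 + |σ| ^ 2 = 1 + σ ^ 2 := by rw [sq_abs]
      rcases eq_or_lt_of_le (abs_nonneg σ) with h0 | ht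
      · rw [habs, ← h0]
        simp only [zero_mul, zero_add]
        nlinarith [Real.pi_gt_three, h1S]
      · set t := |σ| with htdef
        set S := Real.sqrt (1 + σ ^ 2) with hSdef
        have harc : Real.arctan t = π / 2 - Real.arctan t⁻¹ := by
          have := Real.arctan_inv_of_pos ht
          linarith
        have hsinv : Real.sin (Real.arctan t⁻¹) = 1 / S := by
          rw [Real.sin_arctan]
          rw [show 1 + (t⁻¹) ^ 2 = (1 + t ^ 2) / t ^ 2 by field_simp; ring]
          rw [Real.sqrt_div (by positivity) (t ^ 2), Real.sqrt_sq ht.le, hsqa]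
          field_simp
          exact hSdef
        have hat : 1 / S ≤ Real.arctan t⁻¹ := by
          rw [← hsinv]
          exact Real.sin_le (my_arctan_nonneg (by positivity))
        have htS : t < S := by
          nlinarith [sq_abs σ]
        have e2 : t * (1 / S) ≤ t * Real.arctan t⁻¹ :=
          mul_le_mul_of_nonneg_left hat ht.le
        have e1 : 0 ≤ (S - t) * (π / 2 * S - 1) := by
          have hπ : (3:ℝ) < π := Real.pi_gt_three
          apply mul_nonneg (by linarith)
          nlinarith
        rw [habs, harc]
        have e3 : t * (1 / S) * S = t := by field_simp
        nlinarith [e1, e2, hS, mul_le_mul_of_nonneg_right e2 hS.le]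
end
end
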